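/- Let m̄ be an integer with m·m̄ ≡ 1 (mod m+n) and set ξ := ζ^{m̄} (so ξ^m = ζ and ξ is again a primitive d-th root of unity). Then R(m,n) = m(n+1) + Σ_{j=1}^{m−1} (m−j)(ξ^j + ξ^{−j}) = ξ^{−(m−1)}·((ξ^m −1)/(ξ−1))² + mn = |(ξ^m − 1)/(ξ − 1)|² + mn. -/

import Mathlib

namespace RXiAux

/-- Abel summation / telescoping for `(z-1) * ∑ f i z^i`. -/
lemma abel_sum (z : ℂ) (f : ℕ → ℂ) (M : ℕ) :
    (z - 1) * ∑ i ∈ Finset.range (M+1), f i * z ^ i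
      = f M * z ^ (M+1) - f 0
        - ∑ i ∈ Finset.range M, (f (i+1) - f i) * z ^ (i+1) := by
  induction M with
  | zero =>
      simp only [Finset.range_one, Finset.sum_singleton, pow_zero, mul_one, Finset.range_zero,
        Finset.sum_empty, zero_add, pow_one, sub_zero]
      ring
  | succ M ih =>
      rw [Finset.sum_range_succ, mul_add, ih,
        Finset.sum_range_succ (f := fun i => (f (i+1) - f i) * z ^ (i+1))]
      ring

lemma mulrev (x y : ℂ) (h : x * y = 1) (M : ℕ) :
    x ^ M * (∑ j ∈ Finset.range M, y ^ j) = ∑ j ∈ Finset.range M, x ^ (j+1) := by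
  induction M with
  | zero => simp
  | succ M ih =>
      rw [Finset.sum_range_succ, mul_add, Finset.sum_range_succ' (fun j => x ^ (j+1)) M]
      have h1 : x ^ (M+1) * y ^ M = x := by
        have : x ^ (M+1) * y ^ M = x * (x * y) ^ M := by ring
        rw [this, h, one_pow, mul_one]
      have h2 : x ^ (M+1) * ∑ j ∈ Finset.range M, y ^ j
          = ∑ j ∈ Finset.range M, x ^ (j+1+1) := by
        rw [pow_succ, mul_comm (x ^ M) x, mul_assoc, ih, Finset.mul_sum]
        exact Finset.sum_congr rfl fun j _ => by ring
      rw [h1, h2]; ring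

lemma pq (x y : ℂ) (h : x * y = 1) (M : ℕ) :
    (∑ j ∈ Finset.range (M+1), x ^ j) * (∑ j ∈ Finset.range (M+1), y ^ j)
      = ((M:ℂ)+1) + ∑ j ∈ Finset.range M, ((M - j : ℕ) : ℂ) * (x ^ (j+1) + y ^ (j+1)) := by
  have h' : y * x = 1 := by rw [mul_comm]; exact h
  induction M with
  | zero => simp
  | succ M ih =>
      rw [Finset.sum_range_succ (f := fun j => x ^ j),
        Finset.sum_range_succ (f := fun j => y ^ j)]
      have e1 : (∑ j ∈ Finset.range (M+1), x ^ j + x ^ (M+1))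
            * (∑ j ∈ Finset.range (M+1), y ^ j + y ^ (M+1))
          = (∑ j ∈ Finset.range (M+1), x ^ j) * (∑ j ∈ Finset.range (M+1), y ^ j)
            + x ^ (M+1) * (∑ j ∈ Finset.range (M+1), y ^ j)
            + y ^ (M+1) * (∑ j ∈ Finset.range (M+1), x ^ j)
            + x ^ (M+1) * y ^ (M+1) := by ring
      have e2 : x ^ (M+1) * y ^ (M+1) = 1 := by
        rw [← mul_pow, h, one_pow]
      rw [e1, ih, e2, mulrev x y h (M+1), mulrev y x h' (M+1)]
      rw [Finset.sum_range_succ (f := fun j => ((M + 1 - j : ℕ) : ℂ) * (x ^ (j+1) + y ^ (j+1)))]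
      have e3 : ∑ j ∈ Finset.range M, ((M + 1 - j : ℕ) : ℂ) * (x ^ (j+1) + y ^ (j+1))
          = ∑ j ∈ Finset.range M, (((M - j : ℕ) : ℂ) * (x ^ (j+1) + y ^ (j+1))
              + (x ^ (j+1) + y ^ (j+1))) := by
        refine Finset.sum_congr rfl fun j hj => ?_
        have hj' : j < M := Finset.mem_range.mp hj
        have : (M + 1 - j : ℕ) = (M - j) + 1 := by omega
        rw [this]; push_cast; ring
      rw [e3, Finset.sum_add_distrib]
      have e4 : ((M + 1 - (M:ℕ) : ℕ) : ℂ) = 1 := by norm_num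
      rw [e4]
      have e5 : ∑ j ∈ Finset.range (M+1), x ^ (j+1)
          = ∑ j ∈ Finset.range M, x ^ (j+1) + x ^ (M+1) := Finset.sum_range_succ _ _
      have e6 : ∑ j ∈ Finset.range (M+1), y ^ (j+1)
          = ∑ j ∈ Finset.range M, y ^ (j+1) + y ^ (M+1) := Finset.sum_range_succ _ _
      rw [e5, e6, Finset.sum_add_distrib]
      push_cast
      ring

end RXiAux

open RXiAux

/-- In the setting of `R(m,n) = (ζ-1) Σ k_i ζ^i`
(with `ζ` a primitive `d`-th root of unity, `d ≥ 2`, `d ∣ m+n`), let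
`m̄` satisfy `m·m̄ ≡ 1 (mod m+n)` and set `ξ = ζ^m̄`.  Then `ξ^m = ζ`,
`ξ` is again a primitive `d`-th root of unity, and
`R(m,n) = m(n+1) + Σ_{j=1}^{m-1} (m-j)(ξ^j + ξ^{-j})
        = ξ^{-(m-1)} ((ξ^m - 1)/(ξ - 1))² + mn
        = |(ξ^m - 1)/(ξ - 1)|² + mn`. -/
theorem R_xi_forms (m n : ℕ) (hm : 2 ≤ m) (hmn : m < n)
    (hcop : Nat.Coprime m n) (k : ℕ → ℕ)
    (hmono : ∀ i j : ℕ, i < j → j < m + n → k i < k j)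
    (hmem : ∀ x : ℕ, ((m ∣ x ∨ n ∣ x) ∧ x ≤ m * n) ↔ ∃ i < m + n, k i = x)
    (d : ℕ) (hd : 2 ≤ d) (hdvd : d ∣ m + n)
    (ζ : ℂ) (hζ : IsPrimitiveRoot ζ d)
    (R : ℂ) (hR : R = (ζ - 1) * ∑ i ∈ Finset.range (m + n), (k i : ℂ) * ζ ^ i)
    (mbar : ℕ) (hmbar : m * mbar ≡ 1 [MOD (m + n)])
    (ξ : ℂ) (hξ : ξ = ζ ^ mbar) :
    ξ ^ m = ζ ∧ IsPrimitiveRoot ξ d ∧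
    R = (m : ℂ) * (n + 1) + ∑ j ∈ Finset.Icc 1 (m - 1),
      ((m - j : ℕ) : ℂ) * (ξ ^ j + ξ⁻¹ ^ j) ∧
    R = ξ ^ (-((m : ℤ) - 1)) * ((ξ ^ m - 1) / (ξ - 1)) ^ 2 + (m : ℂ) * n ∧
    R = ((‖(ξ ^ m - 1) / (ξ - 1)‖ : ℝ) : ℂ) ^ 2 + (m : ℂ) * n := by
  set N := m + n with hN
  have hN0 : 0 < N := by omega
  have hN5 : 5 ≤ N := by omega
  have hd0 : d ≠ 0 := by omega
  have hcopN : Nat.Coprime m N := by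
    have : Nat.Coprime m (m + n) := by
      simpa [Nat.add_comm] using (Nat.coprime_add_self_left (m := m) (n := n)).mpr hcop
    simpa [hN] using this
  -- ζ has period N
  have hζN : ζ ^ N = 1 := by
    obtain ⟨c, hc⟩ := hdvd
    rw [hc, pow_mul, hζ.pow_eq_one, one_pow]
  have hmodpow : ∀ a : ℕ, ζ ^ a = ζ ^ (a % N) := by
    intro a
    conv_lhs => rw [← Nat.div_add_mod a N]
    rw [pow_add, pow_mul, hζN, one_pow, one_mul]
  have hper : ∀ a b : ℕ, a ≡ b [MOD N] → ζ ^ a = ζ ^ b := by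
    intro a b hab
    rw [hmodpow a, hmodpow b, hab]
  -- part 1 : ξ ^ m = ζ
  have hxm : ξ ^ m = ζ := by
    rw [hξ, ← pow_mul, mul_comm]
    have : ζ ^ (m * mbar) = ζ ^ 1 := hper _ _ (by simpa [hN] using hmbar)
    simpa using this
  -- part 2 : ξ primitive
  have hxprim : IsPrimitiveRoot ξ d := by
    constructor
    · rw [hξ, ← pow_mul, mul_comm, pow_mul, hζ.pow_eq_one, one_pow]
    · intro l hl
      apply hζ.dvd_of_pow_eq_one
      rw [← hxm, ← pow_mul, mul_comm, pow_mul, hl, one_pow]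
  have hξN : ξ ^ N = 1 := by
    rw [hξ, ← pow_mul, mul_comm, pow_mul, hζN, one_pow]
  have hξne1 : ξ ≠ 1 := hxprim.ne_one (by omega)
  have hξ0 : ξ ≠ 0 := by
    intro h
    rw [h, zero_pow (by omega : N ≠ 0)] at hξN
    exact zero_ne_one hξN
  have hζξ : ∀ j : ℕ, ζ ^ j = ξ ^ (m * j % N) := by
    intro j
    rw [hξ, ← pow_mul]
    refine hper _ _ ?_
    calc j ≡ m * mbar * j [MOD N] := by
            conv_lhs => rw [← one_mul j]
            exact (Nat.ModEq.mul_right j (by simpa [hN] using hmbar)).symm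
      _ ≡ mbar * (m * j % N) [MOD N] := by
            have h1 : m * j % N ≡ m * j [MOD N] := Nat.mod_modEq _ _
            calc m * mbar * j = mbar * (m * j) := by ring
              _ ≡ mbar * (m * j % N) [MOD N] := (Nat.ModEq.mul_left mbar h1).symm
  -- the explicit enumeration
  set q : ℕ → ℕ := fun i => m * i / N with hq
  set t : ℕ → ℕ := fun i => m * i % N with ht
  set K : ℕ → ℕ := fun i => if t i ≤ n then m * (i - q i) else n * (q i + 1) with hKdef
  set w : ℕ → ℕ := fun u => min m (min u (N - u)) with hw
  have hdm : ∀ i, m * i = N * q i + t i := fun i => (Nat.div_add_mod (m * i) N).symm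
  have htlt : ∀ i, t i < N := fun i => Nat.mod_lt _ hN0
  have hqle : ∀ i, q i ≤ i := by
    intro i
    calc m * i / N ≤ m * i / m := Nat.div_le_div_left (by omega) (by omega)
      _ = i := Nat.mul_div_cancel_left i (by omega)
  have ht0 : ∀ j, 1 ≤ j → j ≤ N - 1 → t j ≠ 0 := by
    intro j h1 h2 h0
    have : N ∣ m * j := Nat.dvd_of_mod_eq_zero h0
    have : N ∣ j := (Nat.Coprime.dvd_of_dvd_mul_left hcopN.symm this)
    have := Nat.le_of_dvd (by omega) this
    omega
  have htn : ∀ j, j ≤ N - 2 → t j ≠ n := by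
    intro j hj h0
    have h1 : m * (j + 1) % N = 0 := by
      have : m * (j + 1) = N * q j + (t j + m) := by rw [Nat.mul_add, hdm j]; ring
      rw [this, Nat.mul_add_mod, h0, Nat.add_comm, Nat.mod_self]
    have : N ∣ m * (j+1) := Nat.dvd_of_mod_eq_zero h1
    have : N ∣ (j+1) := (Nat.Coprime.dvd_of_dvd_mul_left hcopN.symm this)
    have := Nat.le_of_dvd (by omega) this
    omega
  -- gap lemma
  have hgap : ∀ i : ℕ, i + 1 ≤ N - 1 → K (i+1) = K i + w (t (i+1)) := by
    intro i hi
    have hdm1 : m * (i+1) = N * q i + (t i + m) := by rw [Nat.mul_add, hdm i]; ring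
    have htin : t i ≠ n := htn i (by omega)
    have hti : t i < N := htlt i
    have hqi : q i ≤ i := hqle i
    have h1 : (m:ℤ) * i = (m+n) * q i + t i := by
      have := hdm i
      rw [hN] at this
      exact_mod_cast this
    rcases Nat.lt_or_ge (t i + m) N with hnw | hwrap
    · -- no wrap
      have hq1 : q (i+1) = q i := by
        show m * (i+1) / N = q i
        rw [hdm1, Nat.mul_add_div hN0, Nat.div_eq_of_lt hnw, add_zero]
      have ht1 : t (i+1) = t i + m := by
        show m * (i+1) % N = t i + m
        rw [hdm1, Nat.mul_add_mod, Nat.mod_eq_of_lt hnw]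
      have htile : t i ≤ n := by omega
      by_cases hb : t (i+1) ≤ n
      · have hwv : w (t (i+1)) = m := by
          simp only [hw]
          rw [ht1] at hb ⊢
          omega
        simp only [hKdef]
        rw [if_pos hb, if_pos htile, hwv, hq1,
          show i + 1 - q i = (i - q i) + 1 by omega, Nat.mul_succ]
      · have hwv : w (t (i+1)) = N - (t i + m) := by
          simp only [hw]
          rw [ht1] at hb ⊢
          omega
        simp only [hKdef]
        rw [if_neg hb, if_pos htile, hq1, hwv]
        zify [hqi, (by omega : t i + m ≤ N), (by omega : t i + m ≤ m + n), hN]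
        linear_combination -h1
    · -- wrap
      have htig : n < t i := by omega
      have hq1 : q (i+1) = q i + 1 := by
        show m * (i+1) / N = q i + 1
        rw [hdm1, Nat.mul_add_div hN0]
        congr 1
        exact Nat.div_eq_of_lt_le (by omega) (by omega)
      have ht1 : t (i+1) = t i + m - N := by
        show m * (i+1) % N = t i + m - N
        rw [hdm1, Nat.mul_add_mod, Nat.mod_eq_sub_mod hwrap,
          Nat.mod_eq_of_lt (by omega)]
      have hb : t (i+1) ≤ n := by omega
      have hwv : w (t (i+1)) = t i - n := by
        simp only [hw]
        rw [ht1] at hb ⊢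
        omega
      simp only [hKdef]
      rw [if_pos hb, if_neg (by omega : ¬ t i ≤ n), hq1, hwv,
        show i + 1 - (q i + 1) = i - q i by omega]
      zify [hqi, (by omega : n ≤ t i), hN]
      linear_combination h1
  -- K is in S and monotone, K 0 = 0, K (N-1) = m*n
  have hK0 : K 0 = 0 := by
    simp [hKdef, ht, hq]
  have hKN : K (N-1) = m * n := by
    have e : m * (N - 1) = N * (m - 1) + n := by
      zify [show 1 ≤ N by omega, show 1 ≤ m by omega, show 1 ≤ m + n by omega, hN]
      ring
    have htN : t (N-1) = n := by
      simp only [ht]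
      rw [e, Nat.mul_add_mod, Nat.mod_eq_of_lt (by omega)]
    have hqN : q (N-1) = m - 1 := by
      simp only [hq]
      rw [e, Nat.mul_add_div hN0, Nat.div_eq_of_lt (by omega), add_zero]
    simp only [hKdef]
    rw [htN, if_pos (le_refl n), hqN, show N - 1 - (m-1) = n by omega]
  have hKmono : ∀ j i : ℕ, i < j → j ≤ N - 1 → K i < K j := by
    intro j
    induction j with
    | zero => intro i hij _; omega
    | succ j ihj =>
        intro i hij hj
        have hstep : K (j+1) = K j + w (t (j+1)) := hgap j hj
        have hw1 : 1 ≤ w (t (j+1)) := by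
          have h1 : t (j+1) ≠ 0 := ht0 (j+1) (by omega) (by omega)
          have h2 : t (j+1) < N := htlt (j+1)
          simp only [hw]
          omega
        rcases Nat.lt_or_ge i j with h | h
        · have := ihj i h (by omega)
          omega
        · have : i = j := by omega
          subst this
          omega
  have hKS : ∀ i, i ≤ N - 1 → (m ∣ K i ∨ n ∣ K i) ∧ K i ≤ m * n := by
    intro i hiN
    simp only [hKdef]
    by_cases hb : t i ≤ n
    · rw [if_pos hb]
      refine ⟨Or.inl (dvd_mul_right _ _), ?_⟩
      have hqb : i - n ≤ q i := by
        rcases le_or_gt i n with h | h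
        · omega
        · have hmul : (i - n) * N ≤ m * i := by
            zify [show n ≤ i by omega, hN]
            nlinarith [show (i:ℤ) ≤ m + n by exact_mod_cast (by omega : i ≤ m + n)]
          simp only [hq]
          exact (Nat.le_div_iff_mul_le hN0).mpr hmul
      have : i - q i ≤ n := by omega
      exact Nat.mul_le_mul (le_refl m) this
    · rw [if_neg hb]
      refine ⟨Or.inr (dvd_mul_right _ _), ?_⟩
      have hqb : q i < m := by
        simp only [hq]
        rw [Nat.div_lt_iff_lt_mul hN0]
        have h2 : i < N := by omega
        have h3 : m * i < m * N := mul_lt_mul_of_pos_left h2 (by omega)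
        omega
      have h4 : n * (q i + 1) ≤ n * m := Nat.mul_le_mul (le_refl n) (by omega)
      exact h4.trans_eq (Nat.mul_comm n m)
  -- identification k = K
  have hkK : ∀ i, i < N → k i = K i := by
    classical
    set S : Finset ℕ := (Finset.range (m*n+1)).filter (fun x => m ∣ x ∨ n ∣ x) with hS
    have hmemS : ∀ x, x ∈ S ↔ ∃ i, i < N ∧ k i = x := by
      intro x
      rw [hS, Finset.mem_filter, Finset.mem_range]
      constructor
      · rintro ⟨h1, h2⟩
        obtain ⟨i, hi, hki⟩ := (hmem x).mp ⟨h2, by omega⟩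
        exact ⟨i, hi, hki⟩
      · rintro ⟨i, hiN, rfl⟩
        have := (hmem (k i)).mpr ⟨i, hiN, rfl⟩
        exact ⟨by omega, this.1⟩
    set f : Fin N → ℕ := fun i => k i with hf
    have hfmono : StrictMono f := fun i j hij => hmono i j hij j.isLt
    have hfS : ∀ i, f i ∈ S := fun i => (hmemS _).mpr ⟨i, i.isLt, rfl⟩
    have hcard : S.card = N := by
      have himg : Finset.image f Finset.univ = S := by
        apply Finset.ext
        intro x
        rw [Finset.mem_image, hmemS]
        constructor
        · rintro ⟨i, _, rfl⟩; exact ⟨i, i.isLt, rfl⟩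
        · rintro ⟨i, hiN, rfl⟩; exact ⟨⟨i, hiN⟩, Finset.mem_univ _, rfl⟩
      rw [← himg, Finset.card_image_of_injective _ hfmono.injective,
        Finset.card_univ, Fintype.card_fin]
    set g : Fin N → ℕ := fun i => K i with hg
    have hgmono : StrictMono g := by
      intro i j hij
      exact hKmono j i hij (by have := j.isLt; omega)
    have hgS : ∀ i, g i ∈ S := by
      intro i
      have h1 := hKS i (by have := i.isLt; omega)
      show K (i : ℕ) ∈ S
      rw [hS, Finset.mem_filter, Finset.mem_range]
      exact ⟨by have := h1.2; omega, h1.1⟩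
    have e1 := Finset.orderEmbOfFin_unique hcard hfS hfmono
    have e2 := Finset.orderEmbOfFin_unique hcard hgS hgmono
    intro i hiN
    have : f ⟨i, hiN⟩ = g ⟨i, hiN⟩ := by rw [e1, e2]
    exact this
  -- some modular arithmetic helpers
  have hmbar' : m * mbar ≡ 1 [MOD N] := hmbar
  have hMq : ∀ u : ℕ, (m * (mbar * u % N)) % N = u % N := by
    intro u
    have : m * (mbar * u % N) ≡ u [MOD N] := by
      calc m * (mbar * u % N) ≡ m * (mbar * u) [MOD N] :=
            Nat.ModEq.mul_left m (Nat.mod_modEq _ _)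
        _ = (m * mbar) * u := by ring
        _ ≡ 1 * u [MOD N] := Nat.ModEq.mul_right u hmbar'
        _ = u := one_mul u
    exact this
  have hqM : ∀ j : ℕ, (mbar * (m * j % N)) % N = j % N := by
    intro j
    have : mbar * (m * j % N) ≡ j [MOD N] := by
      calc mbar * (m * j % N) ≡ mbar * (m * j) [MOD N] :=
            Nat.ModEq.mul_left mbar (Nat.mod_modEq _ _)
        _ = (m * mbar) * j := by ring
        _ ≡ 1 * j [MOD N] := Nat.ModEq.mul_right j hmbar'
        _ = j := one_mul j
    exact this
  -- Abel summation
  have hRG : R = (m:ℂ) * n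
      - ∑ u ∈ Finset.Icc 1 (N-1), (w u : ℂ) * ξ ^ u := by
    have hsum1 : ∑ i ∈ Finset.range N, (k i : ℂ) * ζ ^ i
        = ∑ i ∈ Finset.range N, (K i : ℂ) * ζ ^ i :=
      Finset.sum_congr rfl fun i hi => by rw [hkK i (Finset.mem_range.mp hi)]
    rw [hR, hsum1,
      show Finset.range N = Finset.range ((N-1)+1) by congr 1; omega,
      abel_sum ζ (fun i => (K i : ℂ)) (N-1)]
    simp only [hKN, hK0]
    rw [show ζ ^ ((N-1)+1) = 1 by rw [show N - 1 + 1 = N by omega, hζN]]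
    have hsum2 : ∑ i ∈ Finset.range (N-1), ((K (i+1) : ℂ) - (K i : ℂ)) * ζ ^ (i+1)
        = ∑ u ∈ Finset.Icc 1 (N-1), (w u : ℂ) * ξ ^ u := by
      refine Finset.sum_nbij' (i := fun a => t (a+1)) (j := fun u => mbar * u % N - 1)
        ?_ ?_ ?_ ?_ ?_
      · intro a ha
        show t (a+1) ∈ Finset.Icc 1 (N-1)
        rw [Finset.mem_range] at ha
        have h1 := ht0 (a+1) (by omega) (by omega)
        have h2 := htlt (a+1)
        rw [Finset.mem_Icc]
        omega
      · intro u hu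
        show mbar * u % N - 1 ∈ Finset.range (N-1)
        rw [Finset.mem_Icc] at hu
        rw [Finset.mem_range]
        have h1 : mbar * u % N < N := Nat.mod_lt _ hN0
        have h2 : mbar * u % N ≠ 0 := by
          intro h0
          have := hMq u
          rw [h0, Nat.mul_zero, Nat.zero_mod] at this
          rw [Nat.mod_eq_of_lt (show u < N by omega)] at this
          omega
        omega
      · intro a ha
        show mbar * (t (a+1)) % N - 1 = a
        rw [Finset.mem_range] at ha
        have h1 : mbar * (t (a+1)) % N = (a+1) % N := by
          simp only [ht]
          exact hqM (a+1)
        rw [h1, Nat.mod_eq_of_lt (by omega)]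
        omega
      · intro u hu
        show t ((mbar * u % N - 1) + 1) = u
        rw [Finset.mem_Icc] at hu
        have h2 : mbar * u % N ≠ 0 := by
          intro h0
          have := hMq u
          rw [h0, Nat.mul_zero, Nat.zero_mod] at this
          rw [Nat.mod_eq_of_lt (show u < N by omega)] at this
          omega
        rw [show mbar * u % N - 1 + 1 = mbar * u % N by omega]
        simp only [ht]
        rw [hMq u, Nat.mod_eq_of_lt (show u < N by omega)]
      · intro a ha
        show ((K (a+1) : ℂ) - (K a : ℂ)) * ζ ^ (a+1) = (w (t (a+1)) : ℂ) * ξ ^ (t (a+1))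
        rw [Finset.mem_range] at ha
        have hg := hgap a (by omega)
        have hz : ζ ^ (a+1) = ξ ^ (t (a+1)) := by
          simp only [ht]
          exact hζξ (a+1)
        rw [hg, hz]
        push_cast
        ring
    rw [hsum2]
    push_cast
    ring
  -- final algebra
  set P : ℂ := ∑ j ∈ Finset.range m, ξ ^ j with hPdef
  set Q : ℂ := ∑ j ∈ Finset.range m, ξ⁻¹ ^ j with hQdef
  have hxi1 : ξ⁻¹ * ξ = 1 := inv_mul_cancel₀ hξ0
  have hpow_inv : ∀ j, j ≤ N → ξ ^ (N - j) = ξ⁻¹ ^ j := by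
    intro j hj
    have h1 : ξ ^ (N - j) * ξ ^ j = 1 := by
      rw [← pow_add, show N - j + j = N by omega, hξN]
    have h2 : ξ ^ (N-j) = (ξ ^ j)⁻¹ := eq_inv_of_mul_eq_one_left h1
    rw [h2, inv_pow]
  have hgeom0 : ∑ u ∈ Finset.range N, ξ ^ u = 0 := by
    rw [geom_sum_eq hξne1 N, hξN]
    simp
  have herase : Finset.Icc 1 (N-1) = (Finset.range N).erase 0 := by
    ext x
    simp only [Finset.mem_Icc, Finset.mem_erase, Finset.mem_range]
    omega
  have hIoc_all : ∑ u ∈ Finset.Icc 1 (N-1), ξ ^ u = -1 := by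
    rw [herase, Finset.sum_erase_eq_sub (Finset.mem_range.mpr (by omega : 0 < N)), hgeom0]
    simp
  have hIcc_Ioc : ∀ b : ℕ, Finset.Icc 1 b = Finset.Ioc 0 b := by
    intro b
    ext x
    simp only [Finset.mem_Icc, Finset.mem_Ioc]
    omega
  have hrei : ∀ F : ℕ → ℂ, ∑ u ∈ Finset.Ioc n (N-1), F u
      = ∑ j ∈ Finset.Icc 1 (m-1), F (N - j) := by
    intro F
    refine Finset.sum_nbij' (i := fun u => N - u) (j := fun j => N - j) ?_ ?_ ?_ ?_ ?_
    · intro u hu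
      show N - u ∈ Finset.Icc 1 (m-1)
      rw [Finset.mem_Ioc] at hu
      rw [Finset.mem_Icc]
      omega
    · intro j hj
      show N - j ∈ Finset.Ioc n (N-1)
      rw [Finset.mem_Icc] at hj
      rw [Finset.mem_Ioc]
      omega
    · intro u hu
      show N - (N - u) = u
      rw [Finset.mem_Ioc] at hu
      omega
    · intro j hj
      show N - (N - j) = j
      rw [Finset.mem_Icc] at hj
      omega
    · intro u hu
      show F u = F (N - (N - u))
      rw [Finset.mem_Ioc] at hu
      rw [show N - (N - u) = u by omega]
  have h1 : ∀ g : ℕ → ℂ, ∑ u ∈ Finset.Icc 1 (N-1), g u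
      = ∑ u ∈ Finset.Icc 1 (m-1), g u + ∑ u ∈ Finset.Ioc (m-1) n, g u
        + ∑ u ∈ Finset.Ioc n (N-1), g u := by
    intro g
    rw [hIcc_Ioc, hIcc_Ioc,
      ← Finset.sum_Ioc_consecutive g (show (0:ℕ) ≤ m-1 by omega) (show m-1 ≤ N-1 by omega),
      ← Finset.sum_Ioc_consecutive g (show m-1 ≤ n by omega) (show n ≤ N-1 by omega)]
    ring
  have hG : ∑ u ∈ Finset.Icc 1 (N-1), (w u : ℂ) * ξ ^ u
      = (∑ j ∈ Finset.Icc 1 (m-1), (j : ℂ) * ξ ^ j)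
        + (m : ℂ) * (-1 - (∑ j ∈ Finset.Icc 1 (m-1), ξ ^ j)
            - (∑ j ∈ Finset.Icc 1 (m-1), ξ⁻¹ ^ j))
        + (∑ j ∈ Finset.Icc 1 (m-1), (j : ℂ) * ξ⁻¹ ^ j) := by
    rw [h1]
    have hp1 : ∑ u ∈ Finset.Icc 1 (m-1), (w u : ℂ) * ξ ^ u
        = ∑ j ∈ Finset.Icc 1 (m-1), (j : ℂ) * ξ ^ j := by
      refine Finset.sum_congr rfl fun u hu => ?_
      rw [Finset.mem_Icc] at hu
      have h2 : w u = u := by simp only [hw]; omega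
      rw [h2]
    have hp2 : ∑ u ∈ Finset.Ioc (m-1) n, (w u : ℂ) * ξ ^ u
        = (m:ℂ) * ∑ u ∈ Finset.Ioc (m-1) n, ξ ^ u := by
      rw [Finset.mul_sum]
      refine Finset.sum_congr rfl fun u hu => ?_
      rw [Finset.mem_Ioc] at hu
      have h2 : w u = m := by simp only [hw]; omega
      rw [h2]
    have hmid : ∑ u ∈ Finset.Ioc (m-1) n, ξ ^ u
        = -1 - (∑ j ∈ Finset.Icc 1 (m-1), ξ ^ j)
          - (∑ j ∈ Finset.Icc 1 (m-1), ξ⁻¹ ^ j) := by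
      have h2 := h1 (fun u => ξ ^ u)
      rw [hIoc_all] at h2
      have h3 : ∑ u ∈ Finset.Ioc n (N-1), ξ ^ u = ∑ j ∈ Finset.Icc 1 (m-1), ξ⁻¹ ^ j := by
        rw [hrei (fun u => ξ ^ u)]
        refine Finset.sum_congr rfl fun j hj => ?_
        rw [Finset.mem_Icc] at hj
        exact hpow_inv j (by omega)
      rw [h3] at h2
      linear_combination -h2
    have hp3 : ∑ u ∈ Finset.Ioc n (N-1), (w u : ℂ) * ξ ^ u
        = ∑ j ∈ Finset.Icc 1 (m-1), (j : ℂ) * ξ⁻¹ ^ j := by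
      rw [hrei (fun u => (w u : ℂ) * ξ ^ u)]
      refine Finset.sum_congr rfl fun j hj => ?_
      rw [Finset.mem_Icc] at hj
      have h4 : w (N - j) = j := by simp only [hw]; omega
      rw [h4, hpow_inv j (by omega)]
    rw [hp1, hp2, hmid, hp3]
  have hRform1 : R = (m:ℂ) * ((n:ℂ)+1) + ∑ j ∈ Finset.Icc 1 (m-1),
      ((m - j : ℕ) : ℂ) * (ξ ^ j + ξ⁻¹ ^ j) := by
    rw [hRG, hG]
    have hcoef : ∑ j ∈ Finset.Icc 1 (m-1), ((m - j : ℕ) : ℂ) * (ξ ^ j + ξ⁻¹ ^ j)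
        = ∑ j ∈ Finset.Icc 1 (m-1), (((m:ℂ) * ξ ^ j + (m:ℂ) * ξ⁻¹ ^ j)
            - ((j:ℂ) * ξ ^ j + (j:ℂ) * ξ⁻¹ ^ j)) := by
      refine Finset.sum_congr rfl fun j hj => ?_
      rw [Finset.mem_Icc] at hj
      rw [Nat.cast_sub (by omega : j ≤ m)]
      ring
    rw [hcoef, Finset.sum_sub_distrib, Finset.sum_add_distrib, Finset.sum_add_distrib,
      ← Finset.mul_sum, ← Finset.mul_sum]
    ring
  have hPQ : P * Q = (m:ℂ) + ∑ j ∈ Finset.Icc 1 (m-1),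
      ((m - j : ℕ) : ℂ) * (ξ ^ j + ξ⁻¹ ^ j) := by
    have hp := pq ξ ξ⁻¹ (mul_inv_cancel₀ hξ0) (m-1)
    rw [show m - 1 + 1 = m by omega] at hp
    rw [hPdef, hQdef, hp]
    have hconv : ∑ j ∈ Finset.Icc 1 (m-1), ((m - j : ℕ) : ℂ) * (ξ ^ j + ξ⁻¹ ^ j)
        = ∑ j ∈ Finset.range (m-1), ((m - (1 + j) : ℕ) : ℂ) * (ξ ^ (1+j) + ξ⁻¹ ^ (1+j)) := by
      rw [show Finset.Icc 1 (m-1) = Finset.Ico 1 m by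
          ext x
          simp only [Finset.mem_Icc, Finset.mem_Ico]
          omega,
        Finset.sum_Ico_eq_sum_range]
    rw [hconv]
    have he1 : ((m - 1 : ℕ) : ℂ) + 1 = (m : ℂ) := by
      rw [Nat.cast_sub (by omega : 1 ≤ m)]
      ring
    rw [he1]
    congr 1
    refine Finset.sum_congr rfl fun j hj => ?_
    rw [show m - 1 - j = m - (1+j) by omega, show j + 1 = 1 + j by omega]
  have hRPQ : R = (m:ℂ) * (n:ℂ) + P * Q := by
    rw [hRform1, hPQ]
    ring
  have hP : (ξ ^ m - 1)/(ξ - 1) = P := (geom_sum_eq hξne1 m).symm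
  have hQP : Q = ξ⁻¹ ^ (m-1) * P := by
    rw [hQdef, ← Finset.sum_range_reflect (fun j => ξ⁻¹ ^ j) m, hPdef, Finset.mul_sum]
    refine Finset.sum_congr rfl fun j hj => ?_
    rw [Finset.mem_range] at hj
    have h6 : (ξ⁻¹ * ξ) ^ j = 1 := by rw [hxi1, one_pow]
    calc ξ⁻¹ ^ (m-1-j) = ξ⁻¹ ^ (m-1-j) * ((ξ⁻¹*ξ)^j) := by rw [h6, mul_one]
      _ = (ξ⁻¹ ^ (m-1-j) * ξ⁻¹^j) * ξ^j := by rw [mul_pow]; ring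
      _ = ξ⁻¹ ^ (m-1) * ξ ^ j := by rw [← pow_add, show m-1-j+j = m-1 by omega]
  have hform2 : ξ ^ (-((m:ℤ)-1)) * ((ξ^m-1)/(ξ-1))^2 + (m:ℂ)*(n:ℂ) = R := by
    rw [hP]
    have hz : ξ ^ (-((m:ℤ)-1)) = ξ⁻¹ ^ (m-1) := by
      have he : (-((m:ℤ)-1)) = -(((m-1:ℕ):ℤ)) := by
        rw [Nat.cast_sub (by omega : 1 ≤ m)]
        push_cast
        ring
      rw [he, zpow_neg, zpow_natCast, inv_pow]
    rw [hz, hRPQ, hQP]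
    ring
  have hconj : (starRingEnd ℂ) ξ = ξ⁻¹ := by
    have habs : ‖ξ‖ = 1 := by
      exact Complex.norm_eq_one_of_pow_eq_one hξN (by omega)
    have h7 : ξ * (starRingEnd ℂ) ξ = 1 := by
      rw [Complex.mul_conj, Complex.normSq_eq_norm_sq, habs]
      norm_num
    exact eq_inv_of_mul_eq_one_right h7
  have hconjP : (starRingEnd ℂ) P = Q := by
    rw [hPdef, hQdef, map_sum]
    refine Finset.sum_congr rfl fun j _ => ?_
    rw [map_pow, hconj]
  have hform3 : ((‖(ξ^m-1)/(ξ-1)‖ : ℝ) : ℂ)^2 + (m:ℂ)*(n:ℂ) = R := by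
    rw [hP]
    have h8 : ((‖P‖ : ℝ) : ℂ)^2 = P * Q := by
      rw [← hconjP, Complex.mul_conj, ← Complex.sq_norm]
      push_cast
      ring
    rw [h8, hRPQ]
    ring
  exact ⟨hxm, hxprim, hRform1, hform2.symm, hform3.symm⟩
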